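/- Let a(s) be a monic real polynomial of degree n that is Hurwitz stable, let c(s) = s^{n-1} + x₁ s^{n-2} + ⋯ + x_{n-1} be a monic real polynomial of degree n-1 with Re[c(jω)/a(jω)] > 0 for all real ω, and let h(s) be any monic real polynomial of degree n. Then there exists δ₀ > 0 such that for all 0 < δ < δ₀, the rational function (c(s) + δ·h(s))/a(s) is strictly positive real. -/

import Mathlib

open Polynomial Complex Filter Topology


open Polynomial Complex

noncomputable def evalI (p : Polynomial ℝ) (ω : ℝ) : ℂ :=
  Polynomial.aeval ((ω : ℂ) * Complex.I) p

def HurwitzStable (p : Polynomial ℝ) : Prop :=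
  ∀ z : ℂ, Polynomial.aeval z p = 0 → z.re < 0

def SPR (p q : Polynomial ℝ) : Prop :=
  p.degree = q.degree ∧ HurwitzStable q ∧
    ∀ ω : ℝ, 0 < (evalI p ω / evalI q ω).re


-- general limit lemma
lemma eval_div_pow_tendsto {α : Type*} {l : Filter α} {z : α → ℂ}
    (hz : Tendsto (fun x => ‖z x‖) l atTop)
    (p : ℂ[X]) (n : ℕ) (hd : p.natDegree < n + 1) :
    Tendsto (fun x => p.eval (z x) / (z x) ^ n) l (𝓝 (p.coeff n)) := by
  have hz0 : ∀ᶠ x in l, z x ≠ 0 := by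
    filter_upwards [hz.eventually_gt_atTop 0] with x hx
    simpa using (norm_pos_iff).1 hx
  have hinv : Tendsto (fun x => ‖z x‖⁻¹) l (𝓝 0) :=
    tendsto_inv_atTop_zero.comp hz
  have key : ∀ j ∈ Finset.range (n + 1),
      Tendsto (fun x => p.coeff j * ((z x) ^ j / (z x) ^ n)) l
        (𝓝 (if j = n then p.coeff n else 0)) := by
    intro j hj
    rcases eq_or_lt_of_le (Nat.lt_succ_iff.1 (Finset.mem_range.1 hj)) with hjn | hjn
    · simp only [hjn, if_pos rfl]
      have : ∀ᶠ x in l, p.coeff n * ((z x) ^ n / (z x) ^ n) = p.coeff n := by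
        filter_upwards [hz0] with x hx
        rw [div_self (pow_ne_zero _ hx), mul_one]
      exact Tendsto.congr' (EventuallyEq.symm this) tendsto_const_nhds
    · simp only [if_neg hjn.ne]
      rw [← mul_zero (p.coeff j)]
      refine Tendsto.const_mul _ ?_
      rw [tendsto_zero_iff_norm_tendsto_zero]
      have hb : ∀ᶠ x in l, ‖(z x) ^ j / (z x) ^ n‖ ≤ ‖z x‖⁻¹ := by
        filter_upwards [hz.eventually_ge_atTop 1] with x hx
        have hx0 : (0:ℝ) < ‖z x‖ := lt_of_lt_of_le one_pos hx
        rw [norm_div, norm_pow, norm_pow, div_le_iff₀ (by positivity)]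
        rw [← zpow_natCast ‖z x‖ j, ← zpow_natCast ‖z x‖ n, ← zpow_neg_one,
          ← zpow_add₀ hx0.ne']
        apply zpow_le_zpow_right₀ hx
        omega
      exact squeeze_zero_norm' (by filter_upwards [hb] with x hx; simpa using hx) hinv
  have := tendsto_finset_sum (Finset.range (n + 1)) key
  have hsum : (∑ j ∈ Finset.range (n + 1), if j = n then p.coeff n else 0) = p.coeff n := by
    simp
  rw [hsum] at this
  refine this.congr' ?_
  filter_upwards [hz0] with x hx
  rw [eval_eq_sum_range' hd, Finset.sum_div]
  congr 1
  ext j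
  rw [mul_div_assoc]

lemma norm_z_tendsto : Tendsto (fun ω : ℝ => ‖(ω : ℂ) * Complex.I‖) (cocompact ℝ) atTop := by
  have : (fun ω : ℝ => ‖(ω : ℂ) * Complex.I‖) = fun ω : ℝ => ‖ω‖ := by
    ext ω; simp
  rw [this]
  exact tendsto_norm_cocompact_atTop

lemma evalI_eq (p : Polynomial ℝ) (ω : ℝ) :
    evalI p ω = (p.map (algebraMap ℝ ℂ)).eval ((ω : ℂ) * Complex.I) := by
  rw [evalI, aeval_def, eval_map]

lemma continuous_evalI (p : Polynomial ℝ) : Continuous (evalI p) := by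
  exact (p.continuous_aeval (A := ℂ)).comp (Complex.continuous_ofReal.mul continuous_const)

lemma ratio_tendsto_one {n : ℕ} {p a : Polynomial ℝ} (hpmon : p.Monic) (hpdeg : p.natDegree = n)
    (hamon : a.Monic) (hadeg : a.natDegree = n) :
    Tendsto (fun ω : ℝ => evalI p ω / evalI a ω) (cocompact ℝ) (𝓝 1) := by
  set z : ℝ → ℂ := fun ω => (ω : ℂ) * Complex.I with hz
  have hzn : Tendsto (fun ω => ‖z ω‖) (cocompact ℝ) atTop := norm_z_tendsto
  have hz0 : ∀ᶠ ω in cocompact ℝ, z ω ≠ 0 := by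
    filter_upwards [hzn.eventually_gt_atTop 0] with x hx
    simpa using norm_pos_iff.1 hx
  set P := p.map (algebraMap ℝ ℂ)
  set A := a.map (algebraMap ℝ ℂ)
  have hP : P.natDegree < n + 1 := by
    exact lt_of_le_of_lt (Polynomial.natDegree_map_le) (by omega)
  have hA : A.natDegree < n + 1 := by
    exact lt_of_le_of_lt (Polynomial.natDegree_map_le) (by omega)
  have hPc : P.coeff n = 1 := by
    rw [Polynomial.coeff_map, ← hpdeg]
    rw [show p.coeff p.natDegree = 1 from hpmon.coeff_natDegree, map_one]
  have hAc : A.coeff n = 1 := by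
    rw [Polynomial.coeff_map, ← hadeg]
    rw [show a.coeff a.natDegree = 1 from hamon.coeff_natDegree, map_one]
  have h1 := eval_div_pow_tendsto hzn P n hP
  have h2 := eval_div_pow_tendsto hzn A n hA
  rw [hPc] at h1; rw [hAc] at h2
  have := h1.div h2 one_ne_zero
  rw [div_one] at this
  refine this.congr' ?_
  filter_upwards [hz0] with ω hω
  simp only [Pi.div_apply]
  rw [evalI_eq, evalI_eq, div_div_div_cancel_right₀]
  exact pow_ne_zero _ hω

theorem spr_perturbation (n : ℕ) (hn : 1 ≤ n) (a c h : Polynomial ℝ)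
    (hamon : a.Monic) (hadeg : a.natDegree = n) (haH : HurwitzStable a)
    (hcmon : c.Monic) (hcdeg : c.natDegree = n - 1)
    (hpos : ∀ ω : ℝ, 0 < (evalI c ω / evalI a ω).re)
    (hhmon : h.Monic) (hhdeg : h.natDegree = n) :
    ∃ δ₀ > (0 : ℝ), ∀ δ : ℝ, 0 < δ → δ < δ₀ →
      SPR (c + Polynomial.C δ * h) a := by
  -- a never vanishes on the imaginary axis
  have hane : ∀ ω : ℝ, evalI a ω ≠ 0 := by
    intro ω hω
    have := haH _ hω
    simp at this
  set f : ℝ → ℝ := fun ω => (evalI c ω / evalI a ω).re with hf_def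
  set g : ℝ → ℝ := fun ω => (evalI h ω / evalI a ω).re with hg_def
  have hf_cont : Continuous f :=
    Complex.continuous_re.comp ((continuous_evalI c).div (continuous_evalI a) hane)
  have hg_cont : Continuous g :=
    Complex.continuous_re.comp ((continuous_evalI h).div (continuous_evalI a) hane)
  -- g tends to 1 at infinity
  have hg_tendsto : Tendsto g (cocompact ℝ) (𝓝 1) := by
    have := (ratio_tendsto_one hhmon hhdeg hamon hadeg)
    have := (Complex.continuous_re.tendsto 1).comp this
    rw [Complex.one_re] at this; exact this
  have hev : ∀ᶠ ω in cocompact ℝ, (1:ℝ)/2 < g ω :=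
    hg_tendsto.eventually (eventually_gt_nhds (by norm_num))
  obtain ⟨K, hKc, hKsub⟩ := mem_cocompact.mp hev
  set K' := K ∪ Set.Icc (-1:ℝ) 1 with hK'
  have hK'c : IsCompact K' := hKc.union isCompact_Icc
  have hK'ne : K'.Nonempty := ⟨0, Or.inr ⟨by norm_num, by norm_num⟩⟩
  obtain ⟨x₀, hx₀K, hx₀⟩ := hK'c.exists_isMinOn hK'ne hf_cont.continuousOn
  obtain ⟨x₁, hx₁K, hx₁⟩ := hK'c.exists_isMaxOn hK'ne ((continuous_abs.comp hg_cont).continuousOn)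
  set m := f x₀ with hm_def
  set M := |g x₁| with hM_def
  have hm_pos : 0 < m := hpos x₀
  have hM_nonneg : 0 ≤ M := abs_nonneg _
  refine ⟨m / (M + 1), by positivity, ?_⟩
  intro δ hδ hδ₀
  have hδM : δ * (M + 1) < m := by
    rw [← lt_div_iff₀ (by positivity)]; exact hδ₀
  -- key pointwise positivity
  have hkey : ∀ ω : ℝ, 0 < f ω + δ * g ω := by
    intro ω
    by_cases hω : ω ∈ K'
    · have h1 : m ≤ f ω := hx₀ hω
      have h2 : |g ω| ≤ M := hx₁ hω
      have h3 := abs_le.mp h2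
      nlinarith [h3.1, h3.2]
    · have hωK : ω ∈ Kᶜ := fun hc => hω (Or.inl hc)
      have h1 : (1:ℝ)/2 < g ω := hKsub hωK
      have h2 : 0 < f ω := hpos ω
      nlinarith
  refine ⟨?_, haH, ?_⟩
  · -- degrees
    have hdh : (Polynomial.C δ * h).degree = (n : ℕ) := by
      rw [Polynomial.degree_C_mul hδ.ne', Polynomial.degree_eq_natDegree hhmon.ne_zero, hhdeg]
    have hdc : c.degree < (Polynomial.C δ * h).degree := by
      rw [hdh, Polynomial.degree_eq_natDegree hcmon.ne_zero, hcdeg]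
      exact_mod_cast (by omega : n - 1 < n)
    rw [Polynomial.degree_add_eq_right_of_degree_lt hdc, hdh,
      Polynomial.degree_eq_natDegree hamon.ne_zero, hadeg]
  · intro ω
    have heval : evalI (c + Polynomial.C δ * h) ω = evalI c ω + (δ : ℂ) * evalI h ω := by
      simp [evalI, Polynomial.aeval_C]
    have : (evalI (c + Polynomial.C δ * h) ω / evalI a ω).re = f ω + δ * g ω := by
      rw [heval, add_div, mul_div_assoc, Complex.add_re, Complex.re_ofReal_mul]
    rw [this]
    exact hkey ω
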